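/- Let h > 0, d ∈ ℕ, and let L : ℝ^d × ℝ^d → ℝ be C¹. Let q̄ : [0,h] → ℝ^d be a C¹ curve that solves the Euler–Lagrange equations of L. Let φ₁ : [0,h] → ℝ be C¹ with φ₁(0) = 1 and φ₁(h) = 0. Define g : [0,h] → ℝ^d by g(t) = D₁L(q̄(t),q̄'(t))·φ₁(t) + D₂L(q̄(t),q̄'(t))·φ₁'(t). Then ∫₀ʰ g(t) dt = −D₂L(q̄(0),q̄'(0)). Consequently, for any quadrature rule with nodes c_j ∈ [0,1] and weights b_j whose quadrature error on g satisfies |h·Σ_{j=1}^m b_j g(c_j h) − ∫₀ʰ g(t) dt| ≤ η, and for any vector a ∈ ℝ^d with |a| ≤ C_a, the discrete Noether quantity I_d = −( h·Σ_{j=1}^m b_j g(c_j h) )ᵀ a satisfies |I_d − (D₂L(q̄(0),q̄'(0)))ᵀ a| ≤ C_a·η; i.e., the discrete Noether quantity differs from the true Noether quantity p̄(0)ᵀa evaluated on the exact solution by at most the quadrature error times the bound on the infinitesimal generator. -/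

import Mathlib

open scoped BigOperators

set_option maxHeartbeats 1000000

theorem discrete_noether_error_bound
    (h : ℝ) (hh : 0 < h) (d : ℕ)
    (L : EuclideanSpace ℝ (Fin d) → EuclideanSpace ℝ (Fin d) → ℝ)
    (hL : ContDiff ℝ 1 fun p : EuclideanSpace ℝ (Fin d) × EuclideanSpace ℝ (Fin d) =>
      L p.1 p.2)
    (qbar : ℝ → EuclideanSpace ℝ (Fin d)) (hqbar : ContDiff ℝ 1 qbar)
    (hEL : ∀ t ∈ Set.Icc (0 : ℝ) h,
      HasDerivAt (fun s => fderiv ℝ (fun v => L (qbar s) v) (deriv qbar s))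
        (fderiv ℝ (fun u => L u (deriv qbar t)) (qbar t)) t)
    (φ₁ : ℝ → ℝ) (hφ₁ : ContDiff ℝ 1 φ₁) (hφ₁0 : φ₁ 0 = 1) (hφ₁h : φ₁ h = 0)
    (g : ℝ → EuclideanSpace ℝ (Fin d) →L[ℝ] ℝ)
    (hg : ∀ t, g t = φ₁ t • fderiv ℝ (fun u => L u (deriv qbar t)) (qbar t) +
      deriv φ₁ t • fderiv ℝ (fun v => L (qbar t) v) (deriv qbar t)) :
    (∫ t in (0 : ℝ)..h, g t) = -(fderiv ℝ (fun v => L (qbar 0) v) (deriv qbar 0)) ∧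
      ∀ (m : ℕ) (c b : Fin m → ℝ), (∀ j, c j ∈ Set.Icc (0 : ℝ) 1) →
        ∀ η : ℝ, ‖(h • ∑ j, b j • g (c j * h)) - ∫ t in (0 : ℝ)..h, g t‖ ≤ η →
        ∀ (Ca : ℝ) (a : EuclideanSpace ℝ (Fin d)), ‖a‖ ≤ Ca →
          |(-(h • ∑ j, b j • g (c j * h))) a -
              (fderiv ℝ (fun v => L (qbar 0) v) (deriv qbar 0)) a| ≤ Ca * η := by
  have hLdiff : Differentiable ℝ
      (fun p : EuclideanSpace ℝ (Fin d) × EuclideanSpace ℝ (Fin d) => L p.1 p.2) :=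
    hL.differentiable one_ne_zero
  -- partial derivatives expressed via the full derivative
  have hD2 : ∀ t : ℝ, fderiv ℝ (fun v => L (qbar t) v) (deriv qbar t) =
      (fderiv ℝ (fun p : EuclideanSpace ℝ (Fin d) × EuclideanSpace ℝ (Fin d) => L p.1 p.2)
        (qbar t, deriv qbar t)).comp
        (ContinuousLinearMap.inr ℝ (EuclideanSpace ℝ (Fin d)) (EuclideanSpace ℝ (Fin d))) := by
    intro t
    have h0 : HasFDerivAt (fun v : EuclideanSpace ℝ (Fin d) => ((qbar t, v) :
        EuclideanSpace ℝ (Fin d) × EuclideanSpace ℝ (Fin d)))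
        (ContinuousLinearMap.inr ℝ (EuclideanSpace ℝ (Fin d)) (EuclideanSpace ℝ (Fin d)))
        (deriv qbar t) := hasFDerivAt_prodMk_right (qbar t) (deriv qbar t)
    have h1 := ((hLdiff (qbar t, deriv qbar t)).hasFDerivAt).comp (deriv qbar t) h0
    exact h1.fderiv
  have hD1 : ∀ t : ℝ, fderiv ℝ (fun u => L u (deriv qbar t)) (qbar t) =
      (fderiv ℝ (fun p : EuclideanSpace ℝ (Fin d) × EuclideanSpace ℝ (Fin d) => L p.1 p.2)
        (qbar t, deriv qbar t)).comp
        (ContinuousLinearMap.inl ℝ (EuclideanSpace ℝ (Fin d)) (EuclideanSpace ℝ (Fin d))) := by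
    intro t
    have h0 : HasFDerivAt (fun u : EuclideanSpace ℝ (Fin d) => ((u, deriv qbar t) :
        EuclideanSpace ℝ (Fin d) × EuclideanSpace ℝ (Fin d)))
        (ContinuousLinearMap.inl ℝ (EuclideanSpace ℝ (Fin d)) (EuclideanSpace ℝ (Fin d)))
        (qbar t) := hasFDerivAt_prodMk_left (qbar t) (deriv qbar t)
    have h1 := ((hLdiff (qbar t, deriv qbar t)).hasFDerivAt).comp (qbar t) h0
    exact h1.fderiv
  -- continuity of g
  have hcq : Continuous fun t => (qbar t, deriv qbar t) :=
    (hqbar.continuous).prodMk (hqbar.continuous_deriv le_rfl)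
  have hcF : Continuous fun t =>
      fderiv ℝ (fun p : EuclideanSpace ℝ (Fin d) × EuclideanSpace ℝ (Fin d) => L p.1 p.2)
        (qbar t, deriv qbar t) :=
    (hL.continuous_fderiv one_ne_zero).comp hcq
  have hcD2 : Continuous fun t => fderiv ℝ (fun v => L (qbar t) v) (deriv qbar t) := by
    simp only [hD2]
    exact hcF.clm_comp continuous_const
  have hcD1 : Continuous fun t => fderiv ℝ (fun u => L u (deriv qbar t)) (qbar t) := by
    simp only [hD1]
    exact hcF.clm_comp continuous_const
  have hcg : Continuous g := by
    have hc : Continuous fun t => φ₁ t • fderiv ℝ (fun u => L u (deriv qbar t)) (qbar t) +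
        deriv φ₁ t • fderiv ℝ (fun v => L (qbar t) v) (deriv qbar t) :=
      (hφ₁.continuous.smul hcD1).add ((hφ₁.continuous_deriv le_rfl).smul hcD2)
    exact hc.congr fun t => (hg t).symm
  -- FTC for F t = φ₁ t • D₂ t
  have hFTC : (∫ t in (0 : ℝ)..h, g t) =
      φ₁ h • fderiv ℝ (fun v => L (qbar h) v) (deriv qbar h) -
      φ₁ 0 • fderiv ℝ (fun v => L (qbar 0) v) (deriv qbar 0) := by
    apply intervalIntegral.integral_eq_sub_of_hasDerivAt
      (f := fun s => φ₁ s • fderiv ℝ (fun v => L (qbar s) v) (deriv qbar s))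
    · intro t ht
      rw [Set.uIcc_of_le hh.le] at ht
      have hder : HasDerivAt (fun s => φ₁ s •
          fderiv ℝ (fun v => L (qbar s) v) (deriv qbar s))
          (φ₁ t • fderiv ℝ (fun u => L u (deriv qbar t)) (qbar t) +
            deriv φ₁ t • fderiv ℝ (fun v => L (qbar t) v) (deriv qbar t)) t :=
        HasDerivAt.smul ((hφ₁.differentiable one_ne_zero t).hasDerivAt) (hEL t ht)
      rw [hg t]
      exact hder
    · exact hcg.intervalIntegrable 0 h
  have hint : (∫ t in (0 : ℝ)..h, g t) =
      -(fderiv ℝ (fun v => L (qbar 0) v) (deriv qbar 0)) := by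
    rw [hFTC, hφ₁h, hφ₁0, zero_smul, one_smul, zero_sub]
  refine ⟨hint, ?_⟩
  intro m c b _ η hη Ca a ha
  set S := h • ∑ j, b j • g (c j * h) with hS
  set T := fderiv ℝ (fun v => L (qbar 0) v) (deriv qbar 0) with hT
  have hST : ‖S + T‖ ≤ η := by
    rw [hint] at hη
    simpa [sub_neg_eq_add] using hη
  have hval : (-S) a - T a = -((S + T) a) := by
    simp [ContinuousLinearMap.add_apply, ContinuousLinearMap.neg_apply]
    ring
  rw [hval, abs_neg, ← Real.norm_eq_abs]
  calc ‖(S + T) a‖ ≤ ‖S + T‖ * ‖a‖ := (S + T).le_opNorm a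
    _ ≤ η * Ca := mul_le_mul hST ha (norm_nonneg a) (le_trans (norm_nonneg _) hST)
    _ = Ca * η := mul_comm _ _
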